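/- (John–Nirenberg inequality) Let M be a continuous martingale with M₀ = 0 on a filtered probability space, and suppose its BMO₂ norm satisfies ‖M‖_{BMO₂} < 1, i.e. ess sup over stopping times τ of E[⟨M⟩_∞ − ⟨M⟩_τ | F_τ] ≤ ‖M‖²_{BMO₂} < 1. Then for every stopping time τ, E[exp(⟨M⟩_∞ − ⟨M⟩_τ) | F_τ] ≤ 1/(1 − ‖M‖²_{BMO₂}) almost surely. -/

import Mathlib

open MeasureTheory Filter

open Set
open scoped ENNReal NNReal

namespace JNaux

variable {Ω : Type*} {m : MeasurableSpace Ω}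

open Classical in
noncomputable def sig (A : ℝ → Ω → ℝ) (ρ : Ω → ℝ) (s N : ℝ) : Ω → ℝ :=
  fun ω => if ρ ω ≤ N ∧ A (ρ ω) ω + s ≤ A N ω
    then sInf {t | ρ ω ≤ t ∧ A (ρ ω) ω + s ≤ A t ω}
    else max (ρ ω) N

def hit (A : ℝ → Ω → ℝ) (ρ : Ω → ℝ) (s N : ℝ) : Set Ω :=
  {ω | ρ ω ≤ N ∧ A (ρ ω) ω + s ≤ A N ω}

variable {A : ℝ → Ω → ℝ} {ρ : Ω → ℝ} {s N : ℝ} {ω : Ω}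

lemma sig_of_hit (h : ω ∈ hit A ρ s N) :
    sig A ρ s N ω = sInf {t | ρ ω ≤ t ∧ A (ρ ω) ω + s ≤ A t ω} := if_pos h

lemma sig_of_not_hit (h : ω ∉ hit A ρ s N) :
    sig A ρ s N ω = max (ρ ω) N := if_neg h

lemma bddBelow_set : BddBelow {t | ρ ω ≤ t ∧ A (ρ ω) ω + s ≤ A t ω} :=
  ⟨ρ ω, fun t ht => ht.1⟩

lemma ge_rho (h : ω ∈ hit A ρ s N) : ρ ω ≤ sig A ρ s N ω := by
  rw [sig_of_hit h]
  exact le_csInf ⟨N, h⟩ fun t ht => ht.1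

lemma sig_ge_rho : ρ ω ≤ sig A ρ s N ω := by
  by_cases h : ω ∈ hit A ρ s N
  · exact ge_rho h
  · rw [sig_of_not_hit h]; exact le_max_left _ _

lemma sig_mem (hAc : Continuous fun t => A t ω) (h : ω ∈ hit A ρ s N) :
    sig A ρ s N ω ∈ {t | ρ ω ≤ t ∧ A (ρ ω) ω + s ≤ A t ω} := by
  rw [sig_of_hit h]
  refine IsClosed.csInf_mem ?_ ⟨N, h⟩ bddBelow_set
  have : {t | ρ ω ≤ t ∧ A (ρ ω) ω + s ≤ A t ω} =
      Ici (ρ ω) ∩ (fun t => A t ω) ⁻¹' Ici (A (ρ ω) ω + s) := rfl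
  rw [this]
  exact isClosed_Ici.inter (isClosed_Ici.preimage hAc)

lemma sig_le_N (h : ω ∈ hit A ρ s N) : sig A ρ s N ω ≤ N := by
  rw [sig_of_hit h]; exact csInf_le bddBelow_set h

lemma sig_val (hAc : Continuous fun t => A t ω) (hAm : Monotone fun t => A t ω)
    (hs : 0 < s) (h : ω ∈ hit A ρ s N) :
    A (sig A ρ s N ω) ω = A (ρ ω) ω + s := by
  have hmem := sig_mem hAc h
  refine le_antisymm ?_ hmem.2
  by_contra hlt
  push_neg at hlt
  have hρσ : ρ ω < sig A ρ s N ω := by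
    rcases lt_or_eq_of_le hmem.1 with h' | h'
    · exact h'
    · exfalso; rw [← h'] at hlt; linarith [hs]
  have hev : ∀ᶠ t in nhds (sig A ρ s N ω), A (ρ ω) ω + s < A t ω :=
    (hAc.tendsto _).eventually (eventually_gt_nhds hlt)
  obtain ⟨l, u, hlu, hsub⟩ := hev.exists_Ioo_subset
  obtain ⟨t, ht1, ht2⟩ := exists_between (show max l (ρ ω) < sig A ρ s N ω from
    max_lt hlu.1 hρσ)
  have htset : t ∈ {t | ρ ω ≤ t ∧ A (ρ ω) ω + s ≤ A t ω} := by
    refine ⟨le_of_lt (lt_of_le_of_lt (le_max_right _ _) ht1), le_of_lt (hsub ⟨?_, ?_⟩)⟩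
    · exact lt_of_le_of_lt (le_max_left _ _) ht1
    · exact lt_of_lt_of_le ht2 (le_of_lt hlu.2)
  have := csInf_le bddBelow_set htset
  rw [sig_of_hit h] at ht2
  exact absurd (lt_of_le_of_lt this ht2) (lt_irrefl _)


lemma sig_le_iff (hAc : Continuous fun t => A t ω) (hAm : Monotone fun t => A t ω)
    (hs : 0 < s) (h : ω ∈ hit A ρ s N) {t : ℝ} :
    sig A ρ s N ω ≤ t ↔ ρ ω ≤ t ∧ A (ρ ω) ω + s ≤ A t ω := by
  constructor
  · intro hle
    exact ⟨le_trans (ge_rho h) hle, by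
      rw [← sig_val hAc hAm hs h]; exact hAm hle⟩
  · intro ht
    rw [sig_of_hit h]; exact csInf_le bddBelow_set ht

lemma sig_le_set_eq (hAc : ∀ ω, Continuous fun t => A t ω)
    (hAm : ∀ ω, Monotone fun t => A t ω) (hs : 0 < s) (t : ℝ) :
    {ω | sig A ρ s N ω ≤ t} =
      {ω | ρ ω ≤ t ∧ A (ρ ω) ω + s ≤ A t ω} ∪
        {ω | ω ∉ hit A ρ s N ∧ ρ ω ≤ t ∧ N ≤ t} := by
  ext ω
  by_cases hh : ω ∈ hit A ρ s N
  · simp only [Set.mem_setOf_eq, Set.mem_union, sig_le_iff (hAc ω) (hAm ω) hs hh]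
    simp [hh]
  · simp only [Set.mem_setOf_eq, Set.mem_union, sig_of_not_hit hh, max_le_iff, hh,
      not_false_iff, true_and]
    constructor
    · rintro ⟨h1, h2⟩; exact Or.inr ⟨h1, h2⟩
    · rintro (⟨h1, h2⟩ | ⟨h1, h2⟩)
      · by_cases hN : t ≤ N
        · exact absurd ⟨le_trans h1 hN, le_trans h2 (hAm ω hN)⟩ hh
        · exact ⟨h1, le_of_not_ge hN⟩
      · exact ⟨h1, h2⟩

variable {ℱ : Filtration ℝ m}

/-- The elementary set `{ρ ≤ t} ∩ {A_ρ + s ≤ A t}` is `ℱ t`-measurable. -/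
lemma S1_measurable (hAad : Adapted ℱ A) (hAprog : ProgMeasurable ℱ A)
    (hρ : IsStoppingTime ℱ (fun ω => (ρ ω : WithTop ℝ))) (t : ℝ) :
    MeasurableSet[ℱ t] {ω | ρ ω ≤ t ∧ A (ρ ω) ω + s ≤ A t ω} := by
  have hmin : Measurable[ℱ t] (stoppedValue A fun ω => min (ρ ω) t) :=
    (measurable_stoppedValue hAprog (hρ.min_const t)).mono
      ((hρ.min_const t).measurableSpace_le_of_le_const fun ω => min_le_right _ _) le_rfl
  have hset : {ω | ρ ω ≤ t ∧ A (ρ ω) ω + s ≤ A t ω} =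
      {ω | ρ ω ≤ t} ∩ {ω | stoppedValue A (fun ω => min (ρ ω) t) ω + s ≤ A t ω} := by
    ext ω
    simp only [Set.mem_setOf_eq, Set.mem_inter_iff, and_congr_right_iff]
    intro hle
    rw [stoppedValue, min_eq_left (WithTop.coe_le_coe.2 hle)]
    rfl
  rw [hset]
  exact (show MeasurableSet[ℱ t] {ω | ρ ω ≤ t} by simpa using hρ.measurableSet_le t).inter
    (measurableSet_le (hmin.add measurable_const) (hAad t))

lemma hit_measurable (hAad : Adapted ℱ A) (hAprog : ProgMeasurable ℱ A)
    (hρ : IsStoppingTime ℱ (fun ω => (ρ ω : WithTop ℝ))) :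
    MeasurableSet[ℱ N] (hit A ρ s N) :=
  S1_measurable hAad hAprog hρ N

lemma sig_isStoppingTime (hAad : Adapted ℱ A) (hAprog : ProgMeasurable ℱ A)
    (hAc : ∀ ω, Continuous fun t => A t ω) (hAm : ∀ ω, Monotone fun t => A t ω)
    (hρ : IsStoppingTime ℱ (fun ω => (ρ ω : WithTop ℝ))) (hs : 0 < s) :
    IsStoppingTime ℱ (fun ω => (sig A ρ s N ω : WithTop ℝ)) := by
  intro t
  simp only [WithTop.coe_le_coe]
  rw [show {ω | sig A ρ s N ω ≤ t} =
      {ω | ρ ω ≤ t ∧ A (ρ ω) ω + s ≤ A t ω} ∪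
        {ω | ω ∉ hit A ρ s N ∧ ρ ω ≤ t ∧ N ≤ t} from sig_le_set_eq hAc hAm hs t]
  refine (S1_measurable hAad hAprog hρ t).union ?_
  by_cases hN : N ≤ t
  · have : {ω | ω ∉ hit A ρ s N ∧ ρ ω ≤ t ∧ N ≤ t} =
        (hit A ρ s N)ᶜ ∩ {ω | ρ ω ≤ t} := by
      ext ω; simp [hN, and_comm]
    rw [this]
    exact ((ℱ.mono hN _ (hit_measurable hAad hAprog hρ)).compl).inter
      (show MeasurableSet[ℱ t] {ω | ρ ω ≤ t} by simpa using hρ.measurableSet_le t)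
  · have : {ω | ω ∉ hit A ρ s N ∧ ρ ω ≤ t ∧ N ≤ t} = (∅ : Set Ω) := by
      ext ω; simp [hN]
    rw [this]; exact @MeasurableSet.empty _ (ℱ t)

lemma hit_measurableSet_sig (hAad : Adapted ℱ A) (hAprog : ProgMeasurable ℱ A)
    (hAc : ∀ ω, Continuous fun t => A t ω) (hAm : ∀ ω, Monotone fun t => A t ω)
    (hρ : IsStoppingTime ℱ (fun ω => (ρ ω : WithTop ℝ))) (hs : 0 < s) :
    MeasurableSet[(sig_isStoppingTime hAad hAprog hAc hAm hρ hs
      (N := N)).measurableSpace] (hit A ρ s N) := by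
  rw [IsStoppingTime.measurableSet]
  refine ⟨le_iSup (fun t => ℱ t) N _ (hit_measurable hAad hAprog hρ), fun t => ?_⟩
  simp only [WithTop.coe_le_coe]
  have heq : hit A ρ s N ∩ {ω | sig A ρ s N ω ≤ t} =
      hit A ρ s N ∩ {ω | ρ ω ≤ t ∧ A (ρ ω) ω + s ≤ A t ω} := by
    rw [sig_le_set_eq hAc hAm hs t]
    ext ω
    simp only [Set.mem_inter_iff, Set.mem_union, Set.mem_setOf_eq]
    tauto
  rw [heq]
  by_cases hN : N ≤ t
  · exact (ℱ.mono hN _ (hit_measurable hAad hAprog hρ)).inter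
      (S1_measurable hAad hAprog hρ t)
  · have : hit A ρ s N ∩ {ω | ρ ω ≤ t ∧ A (ρ ω) ω + s ≤ A t ω} =
        {ω | ρ ω ≤ t ∧ A (ρ ω) ω + s ≤ A t ω} := by
      refine Set.inter_eq_self_of_subset_right fun ω hω => ?_
      exact ⟨le_trans hω.1 (le_of_not_ge hN), le_trans hω.2 (hAm ω (le_of_not_ge hN))⟩
    rw [this]
    exact S1_measurable hAad hAprog hρ t


variable {μ : Measure Ω} {Ainf : Ω → ℝ} {τ : Ω → ℝ} {b : ℝ}

lemma measurable_A (hAad : Adapted ℱ A) (t : ℝ) : Measurable (A t) :=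
  (hAad t).mono (ℱ.le t) le_rfl

lemma aemeasurable_Ainf (hAad : Adapted ℱ A)
    (hAinf : ∀ᵐ ω ∂μ, Tendsto (fun t => A t ω) atTop (nhds (Ainf ω))) :
    AEMeasurable Ainf μ := by
  refine aemeasurable_of_tendsto_metrizable_ae atTop
    (fun (n : ℕ) => (measurable_A hAad (n : ℝ)).aemeasurable) ?_
  exact hAinf.mono fun ω h => h.comp tendsto_natCast_atTop_atTop

lemma measurable_stopped (hAprog : ProgMeasurable ℱ A) (hρ : IsStoppingTime ℱ (fun ω => (ρ ω : WithTop ℝ))) :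
    Measurable fun ω => A (ρ ω) ω :=
  (measurable_stoppedValue hAprog hρ).mono hρ.measurableSpace_le le_rfl

lemma ae_le_Ainf (hAm : ∀ ω, Monotone fun t => A t ω)
    (hAinf : ∀ᵐ ω ∂μ, Tendsto (fun t => A t ω) atTop (nhds (Ainf ω))) :
    ∀ᵐ ω ∂μ, ∀ t, A t ω ≤ Ainf ω :=
  hAinf.mono fun ω h t => Monotone.ge_of_tendsto (hAm ω) h t

lemma base1 [IsProbabilityMeasure μ]
    (hAad : Adapted ℱ A) (hAprog : ProgMeasurable ℱ A)
    (hAm : ∀ ω, Monotone fun t => A t ω)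
    (hAinf : ∀ᵐ ω ∂μ, Tendsto (fun t => A t ω) atTop (nhds (Ainf ω)))
    (hb0 : 0 ≤ b)
    (hBMO : ∀ (ρ : Ω → ℝ) (hρ : IsStoppingTime ℱ (fun ω => (ρ ω : WithTop ℝ))), (∀ ω, 0 ≤ ρ ω) →
      ∀ᵐ ω ∂μ, (μ[fun ω' => Ainf ω' - A (ρ ω') ω' | hρ.measurableSpace]) ω ≤ b)
    (hτ0 : ∀ ω, 0 ≤ τ ω)
    (hexp : Integrable (fun ω => Real.exp (Ainf ω - A (τ ω) ω)) μ)
    {ρ : Ω → ℝ} (hρ : IsStoppingTime ℱ (fun ω => (ρ ω : WithTop ℝ))) (hτρ : ∀ ω, τ ω ≤ ρ ω)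
    {T : Set Ω} (hT : MeasurableSet[hρ.measurableSpace] T) :
    ∫⁻ ω in T, ENNReal.ofReal (Ainf ω - A (ρ ω) ω) ∂μ ≤ ENNReal.ofReal b * μ T := by
  have hρ0 : ∀ ω, 0 ≤ ρ ω := fun ω => le_trans (hτ0 ω) (hτρ ω)
  set f : Ω → ℝ := fun ω => Ainf ω - A (ρ ω) ω with hf
  have hfm : AEMeasurable f μ :=
    (aemeasurable_Ainf hAad hAinf).sub (measurable_stopped hAprog hρ).aemeasurable
  have hup := ae_le_Ainf hAm hAinf (μ := μ)
  have hnn : 0 ≤ᵐ[μ] f := hup.mono fun ω h => sub_nonneg.2 (h _)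
  have habs : ∀ᵐ ω ∂μ, ‖f ω‖ ≤ Real.exp (Ainf ω - A (τ ω) ω) := by
    filter_upwards [hup] with ω h
    have h1 : 0 ≤ f ω := sub_nonneg.2 (h _)
    have h2 : A (τ ω) ω ≤ A (ρ ω) ω := hAm ω (hτρ ω)
    have h3 : Ainf ω - A (τ ω) ω ≤ Real.exp (Ainf ω - A (τ ω) ω) := by
      nlinarith [Real.add_one_le_exp (Ainf ω - A (τ ω) ω)]
    rw [Real.norm_eq_abs, abs_of_nonneg h1]
    simp only [hf]
    linarith
  have hint : Integrable f μ := hexp.mono' hfm.aestronglyMeasurable habs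
  have hcond := hBMO ρ hρ hρ0
  have h1 : ∫ ω in T, f ω ∂μ = ∫ ω in T, (μ[f|hρ.measurableSpace]) ω ∂μ :=
    (setIntegral_condExp hρ.measurableSpace_le hint hT).symm
  have h2 : ∫ ω in T, (μ[f|hρ.measurableSpace]) ω ∂μ ≤ ∫ _ω in T, b ∂μ :=
    integral_mono_ae integrable_condExp.integrableOn (integrable_const b).integrableOn
      (ae_restrict_of_ae hcond)
  have h3 : ∫ _ω in T, b ∂μ = b * (μ T).toReal := by
    rw [setIntegral_const, smul_eq_mul, mul_comm]
    rfl
  calc ∫⁻ ω in T, ENNReal.ofReal (f ω) ∂μ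
      = ENNReal.ofReal (∫ ω in T, f ω ∂μ) :=
        (ofReal_integral_eq_lintegral_ofReal hint.integrableOn
          (ae_restrict_of_ae hnn)).symm
    _ ≤ ENNReal.ofReal (b * (μ T).toReal) :=
        ENNReal.ofReal_le_ofReal (h1 ▸ (h2.trans_eq h3))
    _ = ENNReal.ofReal b * μ T := by
        rw [ENNReal.ofReal_mul hb0, ENNReal.ofReal_toReal (measure_ne_top μ T)]


lemma pointwise_rep (x : ℝ) (hx : 0 ≤ x) (n : ℕ) :
    ((n : ℝ≥0∞) + 1) * ∫⁻ s in Ioi (0:ℝ),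
        (if s < x then ENNReal.ofReal ((x - s) ^ n) else 0) =
      ENNReal.ofReal (x ^ (n + 1)) := by
  have hind : (fun s => if s < x then ENNReal.ofReal ((x - s) ^ n) else 0) =
      Set.indicator (Iio x) (fun s => ENNReal.ofReal ((x - s) ^ n)) := by
    funext s; simp [Set.indicator_apply, Set.mem_Iio]
  rw [hind, lintegral_indicator measurableSet_Iio,
    Measure.restrict_restrict measurableSet_Iio]
  have hset : Iio x ∩ Ioi 0 = Ioo 0 x := by
    rw [Set.inter_comm, Set.Ioi_inter_Iio]
  rw [hset]
  have hcont : Continuous fun s : ℝ => (x - s) ^ n :=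
    ((continuous_const.sub continuous_id).pow n)
  have hint : IntegrableOn (fun s : ℝ => (x - s) ^ n) (Ioo 0 x) :=
    (hcont.integrableOn_Icc).mono_set Set.Ioo_subset_Icc_self
  have hnn : 0 ≤ᵐ[volume.restrict (Ioo 0 x)] fun s : ℝ => (x - s) ^ n := by
    filter_upwards [ae_restrict_mem measurableSet_Ioo] with s hs
    exact pow_nonneg (by linarith [hs.2]) n
  rw [← ofReal_integral_eq_lintegral_ofReal hint hnn]
  have hval : ∫ s in Ioo 0 x, (x - s) ^ n = x ^ (n + 1) / (n + 1) := by
    rw [← integral_Ioc_eq_integral_Ioo, ← intervalIntegral.integral_of_le hx]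
    rw [intervalIntegral.integral_comp_sub_left (fun u => u ^ n) x]
    rw [sub_self, sub_zero, integral_pow]
    simp [zero_pow (Nat.succ_ne_zero n)]
  rw [hval]
  rw [show ((n : ℝ≥0∞) + 1) = ENNReal.ofReal ((n : ℝ) + 1) by
    rw [ENNReal.ofReal_add (by positivity) zero_le_one]; simp]
  rw [← ENNReal.ofReal_mul (by positivity)]
  congr 1
  field_simp


lemma moment [IsProbabilityMeasure μ]
    (hAad : Adapted ℱ A) (hAprog : ProgMeasurable ℱ A)
    (hAc : ∀ ω, Continuous fun t => A t ω) (hAm : ∀ ω, Monotone fun t => A t ω)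
    (hAinf : ∀ᵐ ω ∂μ, Tendsto (fun t => A t ω) atTop (nhds (Ainf ω)))
    (hb0 : 0 ≤ b)
    (hBMO : ∀ (ρ : Ω → ℝ) (hρ : IsStoppingTime ℱ (fun ω => (ρ ω : WithTop ℝ))), (∀ ω, 0 ≤ ρ ω) →
      ∀ᵐ ω ∂μ, (μ[fun ω' => Ainf ω' - A (ρ ω') ω' | hρ.measurableSpace]) ω ≤ b)
    (hτ0 : ∀ ω, 0 ≤ τ ω)
    (hexp : Integrable (fun ω => Real.exp (Ainf ω - A (τ ω) ω)) μ) :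
    ∀ (n : ℕ) (ρ : Ω → ℝ) (hρ : IsStoppingTime ℱ (fun ω => (ρ ω : WithTop ℝ))), (∀ ω, τ ω ≤ ρ ω) →
      ∀ T : Set Ω, MeasurableSet[hρ.measurableSpace] T →
      ∫⁻ ω in T, ENNReal.ofReal ((Ainf ω - A (ρ ω) ω) ^ n) ∂μ ≤
        (n.factorial : ℝ≥0∞) * ENNReal.ofReal b ^ n * μ T := by
  obtain ⟨Af, hAfm, hAfe⟩ := aemeasurable_Ainf hAad hAinf (μ := μ)
  have hup := ae_le_Ainf hAm hAinf (μ := μ)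
  intro n
  induction n with
  | zero =>
    intro ρ hρ hτρ T hT
    simp only [pow_zero, ENNReal.ofReal_one, Nat.factorial_zero, Nat.cast_one, one_mul]
    rw [setLIntegral_one]
  | succ n ih =>
    intro ρ hρ hτρ T hT
    have hTm : MeasurableSet T := hρ.measurableSpace_le _ hT
    set X' : Ω → ℝ := fun ω => Af ω - A (ρ ω) ω with hX'
    have hX'm : Measurable X' := hAfm.sub (measurable_stopped hAprog hρ)
    have hXX' : ∀ᵐ ω ∂μ, Ainf ω - A (ρ ω) ω = X' ω := by
      filter_upwards [hAfe] with ω h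
      rw [hX']; simp only [h]
    have hX'nn : ∀ᵐ ω ∂μ, 0 ≤ X' ω := by
      filter_upwards [hup, hAfe] with ω h1 h2
      rw [hX']; simp only [← h2]
      exact sub_nonneg.2 (h1 _)
    -- the key per-level bound obtained from the stopping time σ = sig A ρ s N
    have key : ∀ s : ℝ, 0 < s →
        (∫⁻ ω in T, (if s < X' ω then ENNReal.ofReal ((X' ω - s) ^ n) else 0) ∂μ) ≤
          (n.factorial : ℝ≥0∞) * ENNReal.ofReal b ^ n *
            (μ.restrict T) {ω | s ≤ X' ω} := by
      intro s hs
      have hsetm : MeasurableSet {ω | s < X' ω} := measurableSet_lt measurable_const hX'm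
      have hindic : (fun ω => if s < X' ω then ENNReal.ofReal ((X' ω - s) ^ n) else 0) =
          Set.indicator {ω | s < X' ω} (fun ω => ENNReal.ofReal ((X' ω - s) ^ n)) := by
        funext ω; simp [Set.indicator_apply]
      rw [hindic, lintegral_indicator hsetm, Measure.restrict_restrict hsetm]
      set D := {ω | s < X' ω} ∩ T with hD
      have hDm : MeasurableSet D := hsetm.inter hTm
      set g : Ω → ℝ≥0∞ := fun ω => ENNReal.ofReal ((X' ω - s) ^ n) with hg
      have hgm : Measurable g :=
        ENNReal.measurable_ofReal.comp ((hX'm.sub measurable_const).pow_const n)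
      have hhitm : ∀ N : ℕ, MeasurableSet (hit A ρ s (N:ℝ)) := fun N =>
        (ℱ.le _) _ (hit_measurable hAad hAprog hρ)
      have hhitmono : Monotone fun N : ℕ => hit A ρ s (N:ℝ) := by
        intro N M hNM ω hω
        have hNM' : (N:ℝ) ≤ (M:ℝ) := by exact_mod_cast hNM
        exact ⟨hω.1.trans hNM', hω.2.trans (hAm ω hNM')⟩
      have hNbound : ∀ N : ℕ, ∫⁻ ω in D ∩ hit A ρ s (N:ℝ), g ω ∂μ ≤
          (n.factorial : ℝ≥0∞) * ENNReal.ofReal b ^ n *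
            (μ.restrict T) {ω | s ≤ X' ω} := by
        intro N
        have hσ := sig_isStoppingTime (N := (N:ℝ)) hAad hAprog hAc hAm hρ hs
        have hστ : ∀ ω, τ ω ≤ sig A ρ s (N:ℝ) ω := fun ω => (hτρ ω).trans sig_ge_rho
        have hThit : MeasurableSet[hσ.measurableSpace] (T ∩ hit A ρ s (N:ℝ)) := by
          refine MeasurableSet.inter ?_ (hit_measurableSet_sig hAad hAprog hAc hAm hρ hs)
          exact hρ.measurableSpace_mono hσ (fun ω => WithTop.coe_le_coe.2 sig_ge_rho) T hT
        calc ∫⁻ ω in D ∩ hit A ρ s (N:ℝ), g ω ∂μ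
            ≤ ∫⁻ ω in T ∩ hit A ρ s (N:ℝ), g ω ∂μ := by
              refine lintegral_mono_set ?_
              rw [hD]
              exact Set.inter_subset_inter_left _ Set.inter_subset_right
          _ = ∫⁻ ω in T ∩ hit A ρ s (N:ℝ),
                ENNReal.ofReal ((Ainf ω - A (sig A ρ s (N:ℝ) ω) ω) ^ n) ∂μ := by
              refine setLIntegral_congr_fun_ae (hTm.inter (hhitm N)) ?_
              filter_upwards [hAfe] with ω hfe hω
              have hv : A (sig A ρ s (N:ℝ) ω) ω = A (ρ ω) ω + s :=
                sig_val (hAc ω) (hAm ω) hs hω.2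
              simp only [hg, hX', hv, hfe]
              congr 1
              ring
          _ ≤ (n.factorial : ℝ≥0∞) * ENNReal.ofReal b ^ n * μ (T ∩ hit A ρ s (N:ℝ)) :=
              ih (sig A ρ s (N:ℝ)) hσ hστ _ hThit
          _ ≤ (n.factorial : ℝ≥0∞) * ENNReal.ofReal b ^ n *
                (μ.restrict T) {ω | s ≤ X' ω} := by
              refine mul_le_mul_right ?_ _
              rw [Measure.restrict_apply (measurableSet_le measurable_const hX'm)]
              refine measure_mono_ae ?_
              filter_upwards [hup, hAfe] with ω h1 h2
              intro hω
              show ω ∈ {ω | s ≤ X' ω} ∩ T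
              refine ⟨?_, hω.1⟩
              have : A (ρ ω) ω + s ≤ A (N:ℝ) ω := hω.2.2
              have h3 : A (N:ℝ) ω ≤ Ainf ω := h1 _
              show s ≤ X' ω
              rw [hX']; simp only [← h2]
              linarith
      have hcover : ∀ᵐ ω ∂μ, ω ∈ D → ∃ N : ℕ, ω ∈ hit A ρ s (N:ℝ) := by
        filter_upwards [hAinf, hAfe] with ω hconv hfe hωD
        have hlt : A (ρ ω) ω + s < Ainf ω := by
          have h1 : s < X' ω := hωD.1
          rw [hX'] at h1; simp only [← hfe] at h1
          linarith
        obtain ⟨t₀, ht₀⟩ := eventually_atTop.mp (hconv.eventually (eventually_ge_nhds hlt))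
        obtain ⟨N, hN⟩ := exists_nat_ge (max t₀ (ρ ω))
        exact ⟨N, (le_max_right t₀ (ρ ω)).trans hN, ht₀ N ((le_max_left _ _).trans hN)⟩
      calc ∫⁻ ω in D, g ω ∂μ = ∫⁻ ω, D.indicator g ω ∂μ := (lintegral_indicator hDm g).symm
        _ ≤ ∫⁻ ω, ⨆ N : ℕ, (D ∩ hit A ρ s (N:ℝ)).indicator g ω ∂μ := by
            refine lintegral_mono_ae ?_
            filter_upwards [hcover] with ω hc
            by_cases hωD : ω ∈ D
            · obtain ⟨N, hN⟩ := hc hωD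
              rw [Set.indicator_of_mem hωD g]
              refine le_iSup_of_le N ?_
              rw [Set.indicator_of_mem (Set.mem_inter hωD hN) g]
            · rw [Set.indicator_of_notMem hωD]; exact zero_le
        _ = ⨆ N : ℕ, ∫⁻ ω, (D ∩ hit A ρ s (N:ℝ)).indicator g ω ∂μ := by
            refine lintegral_iSup (fun N => hgm.indicator (hDm.inter (hhitm N))) ?_
            intro N M hNM ω
            exact Pi.le_def.1 (Set.indicator_le_indicator_of_subset
              (Set.inter_subset_inter_right _ (hhitmono hNM)) (fun _ => zero_le)) ω
        _ ≤ (n.factorial : ℝ≥0∞) * ENNReal.ofReal b ^ n *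
              (μ.restrict T) {ω | s ≤ X' ω} := by
            refine iSup_le fun N => ?_
            rw [lintegral_indicator (hDm.inter (hhitm N))]
            exact hNbound N
    -- outer computation via Fubini and the layer-cake formula
    set F : Ω → ℝ → ℝ≥0∞ :=
      fun ω s => if s < X' ω then ENNReal.ofReal ((X' ω - s) ^ n) else 0 with hF
    have hFm : Measurable (Function.uncurry F) := by
      have h1 : MeasurableSet {p : Ω × ℝ | p.2 < X' p.1} :=
        measurableSet_lt measurable_snd (hX'm.comp measurable_fst)
      have h2 : Measurable fun p : Ω × ℝ => ENNReal.ofReal ((X' p.1 - p.2) ^ n) :=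
        ENNReal.measurable_ofReal.comp
          (((hX'm.comp measurable_fst).sub measurable_snd).pow_const n)
      exact Measurable.ite h1 h2 measurable_const
    have hfin : (n.factorial : ℝ≥0∞) * ENNReal.ofReal b ^ n ≠ ⊤ :=
      ENNReal.mul_ne_top (ENNReal.natCast_ne_top _)
        (ENNReal.pow_ne_top ENNReal.ofReal_ne_top)
    calc ∫⁻ ω in T, ENNReal.ofReal ((Ainf ω - A (ρ ω) ω) ^ (n + 1)) ∂μ
        = ∫⁻ ω in T, ENNReal.ofReal (X' ω ^ (n + 1)) ∂μ := by
          refine lintegral_congr_ae (ae_restrict_of_ae ?_)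
          filter_upwards [hXX'] with ω h
          rw [h]
      _ = ∫⁻ ω in T, (((n : ℝ≥0∞) + 1) * ∫⁻ s in Ioi (0:ℝ), F ω s) ∂μ := by
          refine lintegral_congr_ae (ae_restrict_of_ae ?_)
          filter_upwards [hX'nn] with ω h
          exact (pointwise_rep (X' ω) h n).symm
      _ = ((n : ℝ≥0∞) + 1) * ∫⁻ ω in T, (∫⁻ s in Ioi (0:ℝ), F ω s) ∂μ :=
          lintegral_const_mul' _ _ (by simp)
      _ = ((n : ℝ≥0∞) + 1) * ∫⁻ s in Ioi (0:ℝ), (∫⁻ ω in T, F ω s ∂μ) := by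
          rw [lintegral_lintegral_swap hFm.aemeasurable]
      _ ≤ ((n : ℝ≥0∞) + 1) * ∫⁻ s in Ioi (0:ℝ),
            (n.factorial : ℝ≥0∞) * ENNReal.ofReal b ^ n *
              (μ.restrict T) {ω | s ≤ X' ω} := by
          refine mul_le_mul_right ?_ _
          refine lintegral_mono_ae ?_
          filter_upwards [ae_restrict_mem measurableSet_Ioi] with s hs
          exact key s hs
      _ = ((n : ℝ≥0∞) + 1) * ((n.factorial : ℝ≥0∞) * ENNReal.ofReal b ^ n *
            ∫⁻ s in Ioi (0:ℝ), (μ.restrict T) {ω | s ≤ X' ω}) := by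
          rw [lintegral_const_mul' _ _ hfin]
      _ = ((n : ℝ≥0∞) + 1) * ((n.factorial : ℝ≥0∞) * ENNReal.ofReal b ^ n *
            ∫⁻ ω in T, ENNReal.ofReal (X' ω) ∂μ) := by
          rw [← lintegral_eq_lintegral_meas_le (μ.restrict T)
            (ae_restrict_of_ae hX'nn) hX'm.aemeasurable]
      _ ≤ ((n : ℝ≥0∞) + 1) * ((n.factorial : ℝ≥0∞) * ENNReal.ofReal b ^ n *
            (ENNReal.ofReal b * μ T)) := by
          refine mul_le_mul_right (mul_le_mul_right ?_ _) _
          have heq : ∫⁻ ω in T, ENNReal.ofReal (X' ω) ∂μ =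
              ∫⁻ ω in T, ENNReal.ofReal (Ainf ω - A (ρ ω) ω) ∂μ := by
            refine lintegral_congr_ae (ae_restrict_of_ae ?_)
            filter_upwards [hXX'] with ω h
            rw [h]
          rw [heq]
          exact base1 hAad hAprog hAm hAinf hb0 hBMO hτ0 hexp hρ hτρ hT
      _ = ((n + 1).factorial : ℝ≥0∞) * ENNReal.ofReal b ^ (n + 1) * μ T := by
          rw [Nat.factorial_succ, Nat.cast_mul, pow_succ]
          push_cast
          ring


lemma exp_expand (x : ℝ) (hx : 0 ≤ x) :
    ENNReal.ofReal (Real.exp x) =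
      ∑' n : ℕ, ENNReal.ofReal (x ^ n) * ((n.factorial : ℝ≥0∞))⁻¹ := by
  have h1 : Real.exp x = ∑' n : ℕ, x ^ n / n.factorial := by
    rw [Real.exp_eq_exp_ℝ, NormedSpace.exp_eq_tsum_div]
  rw [h1, ENNReal.ofReal_tsum_of_nonneg (fun n => by positivity)
    (Real.summable_pow_div_factorial x)]
  congr 1
  funext n
  have hfac : (0:ℝ) < n.factorial := by exact_mod_cast n.factorial_pos
  rw [div_eq_mul_inv, ENNReal.ofReal_mul (by positivity),
    ENNReal.ofReal_inv_of_pos hfac]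
  congr 2
  exact ENNReal.ofReal_natCast n.factorial

end JNaux

open JNaux in
theorem jn_main
    {Ω : Type*} {m : MeasurableSpace Ω} {μ : Measure Ω} [IsProbabilityMeasure μ]
    (ℱ : Filtration ℝ m)
    (M A : ℝ → Ω → ℝ) (Ainf : Ω → ℝ) (b : ℝ)
    (hM : Martingale M ℱ μ)
    (hMcont : ∀ ω, Continuous fun t => M t ω)
    (hM0 : ∀ ω, M 0 ω = 0)
    (hA : Martingale (fun t ω => (M t ω) ^ 2 - A t ω) ℱ μ)
    (hAcont : ∀ ω, Continuous fun t => A t ω)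
    (hAmono : ∀ ω, Monotone fun t => A t ω)
    (hA0 : ∀ ω, A 0 ω = 0)
    (hAinf : ∀ᵐ ω ∂μ, Tendsto (fun t => A t ω) atTop (nhds (Ainf ω)))
    (hb0 : 0 ≤ b) (hb : b < 1)
    (hBMO : ∀ (τ : Ω → ℝ) (hτ : IsStoppingTime ℱ (fun ω => (τ ω : WithTop ℝ))), (∀ ω, 0 ≤ τ ω) →
      ∀ᵐ ω ∂μ, (μ[fun ω' => Ainf ω' - A (τ ω') ω' | hτ.measurableSpace]) ω ≤ b) :
    ∀ (τ : Ω → ℝ) (hτ : IsStoppingTime ℱ (fun ω => (τ ω : WithTop ℝ))), (∀ ω, 0 ≤ τ ω) →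
      ∀ᵐ ω ∂μ,
        (μ[fun ω' => Real.exp (Ainf ω' - A (τ ω') ω') | hτ.measurableSpace]) ω ≤
          1 / (1 - b) := by
  have hbpos : 0 < 1 - b := by linarith
  have hAad : Adapted ℱ A := by
    intro t
    have h1 := ((hM.stronglyAdapted t).mul (hM.stronglyAdapted t)).sub (hA.stronglyAdapted t)
    have h2 : A t = fun ω => M t ω * M t ω - (M t ω ^ 2 - A t ω) := by
      funext ω; ring
    rw [h2]; exact h1.measurable
  have hAprog : ProgMeasurable ℱ A := hAad.stronglyAdapted.progMeasurable_of_continuous hAcont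
  intro τ hτ hτ0
  by_cases hint : Integrable (fun ω => Real.exp (Ainf ω - A (τ ω) ω)) μ
  · -- integrable case: the real content
    have hmom := moment hAad hAprog hAcont hAmono hAinf hb0 hBMO hτ0 hint
    have hXaem : AEMeasurable (fun ω => Ainf ω - A (τ ω) ω) μ :=
      (aemeasurable_Ainf hAad hAinf).sub (measurable_stopped hAprog hτ).aemeasurable
    have hup := ae_le_Ainf hAmono hAinf (μ := μ)
    have hXnn : ∀ᵐ ω ∂μ, 0 ≤ Ainf ω - A (τ ω) ω :=
      hup.mono fun ω h => sub_nonneg.2 (h _)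
    have hlint : ∀ S : Set Ω, MeasurableSet[hτ.measurableSpace] S →
        ∫⁻ ω in S, ENNReal.ofReal (Real.exp (Ainf ω - A (τ ω) ω)) ∂μ ≤
          ENNReal.ofReal (1 / (1 - b)) * μ S := by
      intro S hS
      have haemn : ∀ n : ℕ, AEMeasurable
          (fun ω => ENNReal.ofReal ((Ainf ω - A (τ ω) ω) ^ n) * ((n.factorial : ℝ≥0∞))⁻¹)
          (μ.restrict S) := fun n =>
        ((ENNReal.measurable_ofReal.comp_aemeasurable (hXaem.pow_const n)).mul_const _).restrict
      have h1 : ∫⁻ ω in S, ENNReal.ofReal (Real.exp (Ainf ω - A (τ ω) ω)) ∂μ =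
          ∑' n : ℕ, ∫⁻ ω in S,
            ENNReal.ofReal ((Ainf ω - A (τ ω) ω) ^ n) * ((n.factorial : ℝ≥0∞))⁻¹ ∂μ := by
        rw [← lintegral_tsum haemn]
        refine lintegral_congr_ae (ae_restrict_of_ae ?_)
        filter_upwards [hXnn] with ω h
        rw [exp_expand _ h]
      rw [h1]
      have hfaccancel : ∀ n : ℕ, (n.factorial : ℝ≥0∞) * ((n.factorial : ℝ≥0∞))⁻¹ = 1 :=
        fun n => ENNReal.mul_inv_cancel
          (by exact_mod_cast n.factorial_pos.ne') (ENNReal.natCast_ne_top _)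
      calc ∑' n : ℕ, ∫⁻ ω in S,
              ENNReal.ofReal ((Ainf ω - A (τ ω) ω) ^ n) * ((n.factorial : ℝ≥0∞))⁻¹ ∂μ
          = ∑' n : ℕ, (∫⁻ ω in S, ENNReal.ofReal ((Ainf ω - A (τ ω) ω) ^ n) ∂μ) *
              ((n.factorial : ℝ≥0∞))⁻¹ := by
            congr 1; funext n
            exact lintegral_mul_const' _ _ (by simp [Nat.factorial_ne_zero])
        _ ≤ ∑' n : ℕ, ((n.factorial : ℝ≥0∞) * ENNReal.ofReal b ^ n * μ S) *
              ((n.factorial : ℝ≥0∞))⁻¹ :=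
            ENNReal.tsum_le_tsum fun n =>
              mul_le_mul_left (hmom n τ hτ (fun ω => le_refl _) S hS) _
        _ = ∑' n : ℕ, ENNReal.ofReal b ^ n * μ S := by
            congr 1; funext n
            have h2 : (n.factorial : ℝ≥0∞) * ENNReal.ofReal b ^ n * μ S *
                ((n.factorial : ℝ≥0∞))⁻¹ =
                (n.factorial : ℝ≥0∞) * ((n.factorial : ℝ≥0∞))⁻¹ *
                  (ENNReal.ofReal b ^ n * μ S) := by ring
            rw [h2, hfaccancel n, one_mul]
        _ = (∑' n : ℕ, ENNReal.ofReal b ^ n) * μ S := ENNReal.tsum_mul_right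
        _ = (1 - ENNReal.ofReal b)⁻¹ * μ S := by rw [ENNReal.tsum_geometric]
        _ = ENNReal.ofReal (1 / (1 - b)) * μ S := by
            congr 1
            rw [one_div, ENNReal.ofReal_inv_of_pos hbpos]
            congr 1
            rw [ENNReal.ofReal_sub _ hb0, ENNReal.ofReal_one]
    have hsetint : ∀ S : Set Ω, MeasurableSet[hτ.measurableSpace] S →
        ∫ ω in S, Real.exp (Ainf ω - A (τ ω) ω) ∂μ ≤ (1 / (1 - b)) * (μ S).toReal := by
      intro S hS
      rw [integral_eq_lintegral_of_nonneg_ae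
        (Eventually.of_forall fun ω => (Real.exp_pos _).le)
        hint.aestronglyMeasurable.restrict]
      calc (∫⁻ ω in S, ENNReal.ofReal (Real.exp (Ainf ω - A (τ ω) ω)) ∂μ).toReal
          ≤ (ENNReal.ofReal (1 / (1 - b)) * μ S).toReal :=
            ENNReal.toReal_mono
              (ENNReal.mul_ne_top ENNReal.ofReal_ne_top (measure_ne_top μ S))
              (hlint S hS)
        _ = (1 / (1 - b)) * (μ S).toReal := by
            rw [ENNReal.toReal_mul, ENNReal.toReal_ofReal (by positivity)]
    set g := μ[fun ω' => Real.exp (Ainf ω' - A (τ ω') ω')|hτ.measurableSpace] with hgdef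
    have hzero : ∀ ε : ℝ, 0 < ε → μ {ω | 1 / (1 - b) + ε ≤ g ω} = 0 := by
      intro ε hε
      set S := {ω | 1 / (1 - b) + ε ≤ g ω} with hSdef
      have hSτ : MeasurableSet[hτ.measurableSpace] S :=
        measurableSet_le measurable_const stronglyMeasurable_condExp.measurable
      have hSm : MeasurableSet S := hτ.measurableSpace_le _ hSτ
      have h1 : ∫ ω in S, g ω ∂μ = ∫ ω in S, Real.exp (Ainf ω - A (τ ω) ω) ∂μ :=
        setIntegral_condExp hτ.measurableSpace_le hint hSτ
      have h2 : (1 / (1 - b) + ε) * (μ S).toReal ≤ ∫ ω in S, g ω ∂μ := by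
        have : μ.real S • (1 / (1 - b) + ε) ≤ ∫ ω in S, g ω ∂μ := setIntegral_ge_of_const_le hSm (measure_ne_top μ S)
          (fun ω hω => hω) integrable_condExp.integrableOn
        rw [smul_eq_mul, mul_comm] at this; exact this
      have h3 := hsetint S hSτ
      have h4 : (μ S).toReal = 0 := by
        nlinarith [ENNReal.toReal_nonneg (a := μ S)]
      exact ((ENNReal.toReal_eq_zero_iff _).1 h4).resolve_right (measure_ne_top μ S)
    have hae : ∀ᵐ ω ∂μ, ∀ k : ℕ, g ω < 1 / (1 - b) + 1 / (k + 1) := by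
      rw [ae_all_iff]
      intro k
      have hz := hzero (1 / (k + 1)) (by positivity)
      rw [ae_iff]
      simpa only [not_lt] using hz
    filter_upwards [hae] with ω h
    by_contra hc
    push_neg at hc
    obtain ⟨k, hk⟩ := exists_nat_one_div_lt (sub_pos.2 hc)
    have := h k
    linarith
  · -- non-integrable case: conditional expectation is zero
    rw [condExp_of_not_integrable hint]
    filter_upwards with ω
    simp only [Pi.zero_apply]
    positivity


/-- John–Nirenberg inequality: if M is a continuous martingale with M₀ = 0,
    quadratic variation A = ⟨M⟩ (so that M² − A is a martingale) with limit Ainf = ⟨M⟩_∞,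
    and BMO₂-norm squared at most b < 1, then for every stopping time τ,
    E[exp(⟨M⟩_∞ − ⟨M⟩_τ) | F_τ] ≤ 1/(1 − b) a.s. -/
theorem john_nirenberg
    {Ω : Type*} {m : MeasurableSpace Ω} {μ : Measure Ω} [IsProbabilityMeasure μ]
    (ℱ : Filtration ℝ m)
    (M A : ℝ → Ω → ℝ) (Ainf : Ω → ℝ) (b : ℝ)
    (hM : Martingale M ℱ μ)
    (hMcont : ∀ ω, Continuous fun t => M t ω)
    (hM0 : ∀ ω, M 0 ω = 0)
    (hA : Martingale (fun t ω => (M t ω) ^ 2 - A t ω) ℱ μ)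
    (hAcont : ∀ ω, Continuous fun t => A t ω)
    (hAmono : ∀ ω, Monotone fun t => A t ω)
    (hA0 : ∀ ω, A 0 ω = 0)
    (hAinf : ∀ᵐ ω ∂μ, Tendsto (fun t => A t ω) atTop (nhds (Ainf ω)))
    (hb0 : 0 ≤ b) (hb : b < 1)
    (hBMO : ∀ (τ : Ω → ℝ) (hτ : IsStoppingTime ℱ (fun ω => (τ ω : WithTop ℝ))), (∀ ω, 0 ≤ τ ω) →
      ∀ᵐ ω ∂μ, (μ[fun ω' => Ainf ω' - A (τ ω') ω' | hτ.measurableSpace]) ω ≤ b) :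
    ∀ (τ : Ω → ℝ) (hτ : IsStoppingTime ℱ (fun ω => (τ ω : WithTop ℝ))), (∀ ω, 0 ≤ τ ω) →
      ∀ᵐ ω ∂μ,
        (μ[fun ω' => Real.exp (Ainf ω' - A (τ ω') ω') | hτ.measurableSpace]) ω ≤
          1 / (1 - b) := by
  exact jn_main ℱ M A Ainf b hM hMcont hM0 hA hAcont hAmono hA0 hAinf hb0 hb hBMO
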